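/- Let A be a commutative ring and I ⊆ A an ideal generated by a regular sequence (a₁, …, a_d). Then for every n ≥ 0, the natural surjection Sym^n_A(I) → I^n from the n-th symmetric power of I to the n-th power of I is an isomorphism. -/

import Mathlib

open Finset

namespace Stmt5

variable {A : Type*} [CommRing A]

def Wd {d : ℕ} (a : Fin d → A) {n : ℕ} (f : Fin n → Fin d) : A := ∏ i, a (f i)

def Kgen {d n : ℕ} (a : Fin d → A) : Set ((Fin n → Fin d) → A) :=
  {x | (∃ (f : Fin n → Fin d) (σ : Equiv.Perm (Fin n)),
          x = Pi.single (f ∘ σ) 1 - Pi.single f 1) ∨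
       (∃ (f : Fin n → Fin d) (i : Fin n) (p q : Fin d),
          x = a q • (Pi.single (Function.update f i p) 1 : (Fin n → Fin d) → A)
            - a p • (Pi.single (Function.update f i q) 1 : (Fin n → Fin d) → A))}

def KK {d n : ℕ} (a : Fin d → A) : Submodule A ((Fin n → Fin d) → A) :=
  Submodule.span A (Kgen a)

def ev {d n : ℕ} (a : Fin d → A) : ((Fin n → Fin d) → A) →ₗ[A] A where
  toFun c := ∑ f : Fin n → Fin d, c f * Wd a f
  map_add' c c' := by simp [add_mul, Finset.sum_add_distrib]
  map_smul' r c := by simp [Finset.mul_sum, mul_assoc]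

lemma Wd_comp_perm {d n : ℕ} (a : Fin d → A) (f : Fin n → Fin d) (σ : Equiv.Perm (Fin n)) :
    Wd a (f ∘ σ) = Wd a f := by
  simpa [Wd, Function.comp] using Equiv.prod_comp σ (fun i => a (f i))

lemma ev_single {d n : ℕ} (a : Fin d → A) (f : Fin n → Fin d) (r : A) :
    ev a (Pi.single f r) = r * Wd a f := by
  simp only [ev, LinearMap.coe_mk, AddHom.coe_mk]
  rw [Finset.sum_eq_single f] <;> simp +contextual [Pi.single_apply]

lemma Wd_update {d n : ℕ} (a : Fin d → A) (f : Fin n → Fin d) (i : Fin n) (p : Fin d) :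
    Wd a (Function.update f i p) = a p * ∏ j ∈ univ.erase i, a (f j) := by
  rw [Wd, ← Finset.mul_prod_erase _ _ (mem_univ i)]
  congr 1
  · simp
  · exact Finset.prod_congr rfl fun j hj => by
      simp [Function.update_apply, (Finset.mem_erase.mp hj).1]

lemma KK_le_ker_ev {d n : ℕ} (a : Fin d → A) : KK a ≤ LinearMap.ker (ev (n := n) a) := by
  rw [KK, Submodule.span_le]
  rintro x (⟨f, σ, rfl⟩ | ⟨f, i, p, q, rfl⟩) <;> simp only [SetLike.mem_coe, LinearMap.mem_ker,
    map_sub, map_smul, ev_single, smul_eq_mul]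
  · rw [Wd_comp_perm]; ring
  · rw [Wd_update, Wd_update]; ring


section
variable {A : Type*} [CommRing A]
variable {d n : ℕ} (a : Fin d → A)

variable {A : Type*} [CommRing A]
variable {d n : ℕ} (a : Fin d → A)


lemma Wd_cons (j : Fin d) (g : Fin n → Fin d) :
    Wd a (Fin.cons j g) = a j * Wd a g := by
  simp [Wd, Fin.prod_univ_succ]

lemma span_range_Wd : ∀ n : ℕ, Ideal.span (Set.range (Wd a (n := n)))
    = (Ideal.span (Set.range a)) ^ n := by
  intro n
  induction n with
  | zero =>
      have : Set.range (Wd a (n := 0)) = {1} := by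
        apply Set.eq_singleton_iff_unique_mem.mpr
        constructor
        · exact ⟨finZeroElim, by simp [Wd]⟩
        · rintro x ⟨f, rfl⟩; simp [Wd]
      rw [this, pow_zero, Ideal.one_eq_top, Ideal.span_singleton_one]
  | succ n ih =>
      rw [pow_succ, ← ih, mul_comm, Ideal.span_mul_span']
      congr 1
      ext x
      simp only [Set.mem_mul]
      constructor
      · rintro ⟨f, rfl⟩
        refine ⟨a (f 0), ⟨f 0, rfl⟩, Wd a (fun i => f i.succ), ⟨_, rfl⟩, ?_⟩
        simp [Wd, Fin.prod_univ_succ]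
      · rintro ⟨y, hy, z, hz, rfl⟩
        obtain ⟨j, rfl⟩ := hy
        obtain ⟨g, rfl⟩ := hz
        exact ⟨Fin.cons j g, Wd_cons a j g⟩

lemma mem_pow_iff (x : A) :
    x ∈ (Ideal.span (Set.range a)) ^ n ↔ ∃ c : (Fin n → Fin d) → A,
      ∑ f : Fin n → Fin d, c f * Wd a f = x := by
  rw [← span_range_Wd a n, ← Ideal.submodule_span_eq]
  simp only [Submodule.mem_span_range_iff_exists_fun, smul_eq_mul]

lemma Wd_mem_pow (f : Fin n → Fin d) : Wd a f ∈ (Ideal.span (Set.range a)) ^ n := by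
  rw [← span_range_Wd a n]; exact Ideal.subset_span ⟨f, rfl⟩

noncomputable def classSum (c : (Fin n → Fin d) → A) (f : Fin n → Fin d) : A :=
  ∑ g ∈ univ.filter (fun g => ∃ σ : Equiv.Perm (Fin n), g = f ∘ σ), c g


end

variable {d n : ℕ}

noncomputable def srt (f : Fin n → Fin d) : Fin n → Fin d := f ∘ Tuple.sort f

lemma monotone_srt (f : Fin n → Fin d) : Monotone (srt f) := Tuple.monotone_sort f

lemma mono_unique {f g : Fin n → Fin d} (hf : Monotone f) (hg : Monotone g)
    (h : ∃ σ : Equiv.Perm (Fin n), g = f ∘ σ) : f = g := by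
  obtain ⟨σ, rfl⟩ := h
  have h1 := Tuple.comp_perm_comp_sort_eq_comp_sort (σ := σ) (f := f)
  rw [Tuple.sort_eq_refl_iff_monotone.mpr hg, Tuple.sort_eq_refl_iff_monotone.mpr hf] at h1
  simpa using h1.symm

def tcount (f : Fin n → Fin (d + 1)) : ℕ := #(univ.filter fun i => f i = Fin.last d)

lemma tcount_le (f : Fin n → Fin (d + 1)) : tcount f ≤ n :=
  le_trans (card_filter_le _ _) (by simp)

lemma tcount_comp_perm (f : Fin n → Fin (d + 1)) (σ : Equiv.Perm (Fin n)) :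
    tcount (f ∘ σ) = tcount f := by
  apply Finset.card_bij' (fun i _ => σ i) (fun i _ => σ.symm i) <;>
    simp [tcount, Function.comp]

lemma tcount_update_lt (f : Fin n → Fin (d + 1)) (i : Fin n) (v : Fin (d + 1))
    (hf : f i = Fin.last d) (hv : v ≠ Fin.last d) :
    tcount (Function.update f i v) + 1 ≤ tcount f := by
  have hsub : (univ.filter fun j => Function.update f i v j = Fin.last d) ⊆
      (univ.filter fun j => f j = Fin.last d).erase i := by
    intro j hj
    simp only [mem_filter, mem_univ, true_and] at hj
    have hji : j ≠ i := by rintro rfl; simp at hj; exact hv hj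
    rw [Function.update_apply, if_neg hji] at hj
    simp [hji, hj]
  have h1 := card_le_card hsub
  rw [card_erase_of_mem (by simp [hf])] at h1
  have hmem : i ∈ univ.filter fun j => f j = Fin.last d := by simp [hf]
  have hpos : 0 < #(univ.filter fun j => f j = Fin.last d) := card_pos.mpr ⟨i, hmem⟩
  have htc : tcount (Function.update f i v) =
      #(univ.filter fun j => Function.update f i v j = Fin.last d) := rfl
  have htc2 : tcount f = #(univ.filter fun j => f j = Fin.last d) := rfl
  omega

def nf (n t : ℕ) {d : ℕ} (g : Fin (n - t) → Fin d) : Fin n → Fin (d + 1) :=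
  fun i => if h : (i : ℕ) < n - t then (g ⟨i, h⟩).castSucc else Fin.last d

lemma nf_inj {t : ℕ} : Function.Injective (nf n t (d := d)) := by
  intro g g' h
  funext j
  have hj : ((⟨(j : ℕ), lt_of_lt_of_le j.isLt (Nat.sub_le n t)⟩ : Fin n) : ℕ) < n - t := j.isLt
  have := congrFun h ⟨(j : ℕ), lt_of_lt_of_le j.isLt (Nat.sub_le n t)⟩
  rw [nf, nf, dif_pos hj, dif_pos hj] at this
  simpa using Fin.castSucc_injective _ this

lemma card_filter_coe_lt {m : ℕ} (h : m ≤ n) :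
    #(univ.filter fun i : Fin n => (i : ℕ) < m) = m := by
  rw [← Fintype.card_fin m]
  symm
  apply Finset.card_bij' (fun (i : Fin m) _ => (⟨(i : ℕ), lt_of_lt_of_le i.isLt h⟩ : Fin n))
    (fun i hi => (⟨(i : ℕ), by simpa using hi⟩ : Fin m)) <;> simp

lemma tcount_nf {t : ℕ} (ht : t ≤ n) (g : Fin (n - t) → Fin d) :
    tcount (nf n t g) = t := by
  have : (univ.filter fun i => nf n t g i = Fin.last d) =
      (univ.filter fun i : Fin n => ¬ (i : ℕ) < n - t) := by
    ext i
    simp only [Finset.mem_filter, Finset.mem_univ, true_and]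
    simp only [nf]
    by_cases h : (i : ℕ) < n - t
    · simp only [dif_pos h, h, not_true_eq_false, iff_false]
      exact ne_of_lt (Fin.castSucc_lt_last _)
    · simp [dif_neg h, h]
  rw [tcount, this]
  have h2 := Finset.card_filter_add_card_filter_not
    (s := (univ : Finset (Fin n))) (p := fun i : Fin n => (i : ℕ) < n - t)
  rw [card_filter_coe_lt (Nat.sub_le n t)] at h2
  simp only [card_univ, Fintype.card_fin] at h2
  omega

lemma monotone_nf_iff {t : ℕ} (g : Fin (n - t) → Fin d) :
    Monotone (nf n t g) ↔ Monotone g := by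
  constructor
  · intro h i j hij
    have h2 := h (a := (⟨(i : ℕ), lt_of_lt_of_le i.isLt (Nat.sub_le n t)⟩ : Fin n))
      (b := (⟨(j : ℕ), lt_of_lt_of_le j.isLt (Nat.sub_le n t)⟩ : Fin n)) hij
    rw [nf, nf, dif_pos i.isLt, dif_pos j.isLt] at h2
    simpa [Fin.castSucc_le_castSucc_iff] using h2
  · intro hg i j hij
    simp only [nf]
    by_cases hi : (i : ℕ) < n - t <;> by_cases hj : (j : ℕ) < n - t
    · rw [dif_pos hi, dif_pos hj]
      have : ((⟨(i : ℕ), hi⟩ : Fin (n - t))) ≤ ⟨(j : ℕ), hj⟩ := hij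
      simpa [Fin.castSucc_le_castSucc_iff] using hg this
    · rw [dif_pos hi, dif_neg hj]; exact Fin.le_last _
    · exfalso; exact hi (lt_of_le_of_lt (by exact_mod_cast hij) hj)
    · rw [dif_neg hi, dif_neg hj]
  
lemma exists_nf {f : Fin n → Fin (d + 1)} (hf : Monotone f) :
    ∃ g : Fin (n - tcount f) → Fin d, f = nf n (tcount f) g := by
  set t := tcount f with hts
  have htc : t = #(univ.filter fun j => f j = Fin.last d) := rfl
  have key : ∀ i : Fin n, f i = Fin.last d ↔ n - t ≤ (i : ℕ) := by
    intro i
    constructor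
    · intro hi
      have hsub : Finset.Ici i ⊆ univ.filter fun j => f j = Fin.last d := by
        intro j hj
        simp only [Finset.mem_Ici] at hj
        have : f i ≤ f j := hf hj
        rw [hi] at this
        simp [Fin.last_le_iff.mp this]
      have := card_le_card hsub
      rw [Fin.card_Ici] at this
      have hi2 := i.isLt
      omega
    · intro h
      by_contra hne
      have hsub : (univ.filter fun j => f j = Fin.last d) ⊆ Finset.Ioi i := by
        intro j hj
        simp only [mem_filter, mem_univ, true_and] at hj
        simp only [Finset.mem_Ioi]
        by_contra hji
        push_neg at hji
        have : f j ≤ f i := hf hji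
        rw [hj] at this
        exact hne (Fin.last_le_iff.mp this)
      have := card_le_card hsub
      rw [Fin.card_Ioi] at this
      have hi2 := i.isLt
      omega
  refine ⟨fun j => (f ⟨(j : ℕ), lt_of_lt_of_le j.isLt (Nat.sub_le _ _)⟩).castPred ?_, ?_⟩
  · intro hc
    have := (key _).mp hc
    simp only at this
    have := j.isLt
    omega
  · funext i
    rw [nf]
    by_cases h : (i : ℕ) < n - t
    · rw [dif_pos h]
      simp [Fin.castSucc_castPred]
    · rw [dif_neg h]
      exact (key i).mpr (by omega)


section
variable {A : Type*} [CommRing A] {d n : ℕ}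

lemma eq_sum_single (c : (Fin n → Fin d) → A) : c = ∑ f, Pi.single f (c f) :=
  (Finset.univ_sum_single c).symm

lemma single_eq_smul (f : Fin n → Fin d) (r : A) :
    Pi.single f r = r • (Pi.single f 1 : (Fin n → Fin d) → A) := by
  rw [← Pi.single_smul, smul_eq_mul, mul_one]

noncomputable def Psi (c : (Fin n → Fin d) → A) : (Fin n → Fin d) → A :=
  ∑ f, Pi.single (srt f) (c f)

lemma sub_Psi_mem_KK (a : Fin d → A) (c : (Fin n → Fin d) → A) : c - Psi c ∈ KK a := by
  have : c - Psi c = ∑ f, (Pi.single f (c f) - Pi.single (srt f) (c f)) := by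
    rw [Finset.sum_sub_distrib, ← Psi, ← eq_sum_single]
  rw [this]
  apply Submodule.sum_mem
  intro f _
  rw [single_eq_smul, single_eq_smul (srt f), ← smul_sub, ← neg_sub, smul_neg, ← neg_smul]
  exact Submodule.smul_mem _ _ (Submodule.subset_span (Or.inl ⟨f, Tuple.sort f, rfl⟩))

lemma Psi_apply_eq_zero {c : (Fin n → Fin d) → A} {g : Fin n → Fin d}
    (H : ∀ f, srt f = g → c f = 0) : Psi c g = 0 := by
  rw [Psi, Finset.sum_apply]
  apply Finset.sum_eq_zero
  intro f _
  rw [Pi.single_apply]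
  split
  · rename_i h; rw [H f h.symm]
  · rfl

lemma Psi_apply_not_monotone {c : (Fin n → Fin d) → A} {g : Fin n → Fin d}
    (H : ¬ Monotone g) : Psi c g = 0 :=
  Psi_apply_eq_zero fun f hf => absurd (hf ▸ monotone_srt f) H

lemma classSum_add (x y : (Fin n → Fin d) → A) (f : Fin n → Fin d) :
    classSum (x + y) f = classSum x f + classSum y f := by
  simp [classSum, Finset.sum_add_distrib]

lemma classSum_smul (r : A) (x : (Fin n → Fin d) → A) (f : Fin n → Fin d) :
    classSum (r • x) f = r * classSum x f := by
  simp [classSum, Finset.mul_sum]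

lemma classSum_single (f₁ f : Fin n → Fin d) (r : A) :
    classSum (Pi.single f₁ r) f
      = if ∃ σ : Equiv.Perm (Fin n), f₁ = f ∘ σ then r else 0 := by
  classical
  rw [classSum]
  rw [Finset.sum_congr rfl (fun g _ => Pi.single_apply f₁ r g)]
  rw [Finset.sum_ite_eq' (univ.filter fun g => ∃ σ : Equiv.Perm (Fin n), g = f ∘ σ) f₁
    (fun _ => r)]
  simp only [mem_filter, mem_univ, true_and]

lemma exists_comp_perm_trans {f f₀ : Fin n → Fin d} (σ₀ : Equiv.Perm (Fin n)) :
    (∃ σ : Equiv.Perm (Fin n), f₀ ∘ σ₀ = f ∘ σ) ↔ ∃ σ : Equiv.Perm (Fin n), f₀ = f ∘ σ := by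
  constructor
  · rintro ⟨σ, hσ⟩
    refine ⟨σ₀.symm.trans σ, ?_⟩
    funext i
    have := congrFun hσ (σ₀.symm i)
    simpa using this
  · rintro ⟨σ, rfl⟩
    exact ⟨σ₀.trans σ, rfl⟩

lemma classSum_sub (x y : (Fin n → Fin d) → A) (f : Fin n → Fin d) :
    classSum (x - y) f = classSum x f - classSum y f := by
  simp [classSum, Finset.sum_sub_distrib]

lemma classSum_mem_of_KK {a : Fin d → A} {I : Ideal A} (hI : Set.range a ⊆ I)
    {k : (Fin n → Fin d) → A} (hk : k ∈ KK a) (f : Fin n → Fin d) :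
    classSum k f ∈ I := by
  induction hk using Submodule.span_induction with
  | mem x hx =>
      rcases hx with ⟨f₀, σ₀, rfl⟩ | ⟨f₀, i, p, q, rfl⟩
      · rw [classSum_sub, classSum_single, classSum_single]
        simp only [exists_comp_perm_trans σ₀]
        rw [sub_self]
        exact zero_mem I
      · rw [classSum_sub, classSum_smul, classSum_smul, classSum_single, classSum_single]
        apply sub_mem
        · exact Ideal.mul_mem_right _ _ (hI ⟨q, rfl⟩)
        · exact Ideal.mul_mem_right _ _ (hI ⟨p, rfl⟩)
  | zero => simpa [classSum] using zero_mem I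

  | add x y _ _ hx hy => rw [classSum_add]; exact add_mem hx hy
  | smul r x _ hx => rw [classSum_smul]; exact Ideal.mul_mem_left _ _ hx

/-- pointwise membership for sorted-supported functions -/
lemma pointwise_of_classSum {c : (Fin n → Fin d) → A} {I : Ideal A}
    (hsupp : ∀ g, ¬ Monotone g → c g = 0)
    (hcl : ∀ g, classSum c g ∈ I) : ∀ g, c g ∈ I := by
  intro g
  by_cases hg : Monotone g
  · have : classSum c g = c g := by
      rw [classSum]
      rw [Finset.sum_eq_single g]
      · intro g' hg' hne
        simp only [mem_filter, mem_univ, true_and] at hg'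
        by_cases hmono : Monotone g'
        · exact absurd (mono_unique hg hmono hg').symm hne
        · exact hsupp g' hmono
      · intro hgg
        exact absurd (mem_filter.mpr ⟨mem_univ g, ⟨Equiv.refl _, rfl⟩⟩) hgg
    rw [← this]; exact hcl g
  · rw [hsupp g hg]; exact zero_mem I

end

section
variable {A : Type*} [CommRing A] {d n : ℕ}

def Hreg (a : Fin d → A) : Prop :=
  ∀ (i : Fin d) (x : A), a i * x ∈ Ideal.span (a '' {j | j < i}) →
    x ∈ Ideal.span (a '' {j | j < i})

lemma smul_top_eq (J : Ideal A) : (J • ⊤ : Submodule A A) = J := by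
  apply le_antisymm
  · exact Submodule.smul_le.mpr fun r hr m _ => by
      simpa [smul_eq_mul] using J.mul_mem_right m hr
  · intro x hx
    simpa using Submodule.smul_mem_smul hx (Submodule.mem_top (x := (1:A)))

lemma hreg_of_isWeaklyRegular {a : Fin d → A}
    (h : RingTheory.Sequence.IsWeaklyRegular A (List.ofFn a)) : Hreg a := by
  intro i x hx
  have hlen : i.1 < (List.ofFn a).length := by simp [i.isLt]
  have hr := h.regular_mod_prev i.1 hlen
  have hset : Ideal.ofList ((List.ofFn a).take i.1) = Ideal.span (a '' {j | j < i}) := by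
    unfold Ideal.ofList
    congr 1
    ext y
    simp only [Set.mem_setOf_eq]
    constructor
    · intro hy
      rw [List.mem_iff_getElem] at hy
      obtain ⟨k, hk, hEq⟩ := hy
      rw [List.length_take, List.length_ofFn] at hk
      have hki : k < i.1 := lt_of_lt_of_le hk (min_le_left _ _)
      have hkd : k < d := lt_of_lt_of_le hk (min_le_right _ _)
      refine ⟨⟨k, hkd⟩, hki, ?_⟩
      rw [← hEq, List.getElem_take, List.getElem_ofFn]
    · rintro ⟨j, hj, rfl⟩
      rw [List.mem_iff_getElem]
      have hj' : (j : ℕ) < i.1 := hj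
      refine ⟨j.1, ?_, ?_⟩
      · simp [List.length_take, List.length_ofFn]; omega
      · rw [List.getElem_take, List.getElem_ofFn]
  rw [hset] at hr
  have hval : (List.ofFn a)[i.1] = a i := by
    rw [List.getElem_ofFn]
  rw [hval] at hr
  have h0 : (a i) • (Submodule.Quotient.mk x :
      A ⧸ (Ideal.span (a '' {j | j < i}) • ⊤ : Submodule A A)) = a i • 0 := by
    rw [smul_zero, ← Submodule.Quotient.mk_smul, Submodule.Quotient.mk_eq_zero]
    rw [smul_top_eq]
    simpa [smul_eq_mul] using hx
  have := hr h0
  rw [Submodule.Quotient.mk_eq_zero, smul_top_eq] at this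
  exact this

lemma Hreg_castSucc {a : Fin (d+1) → A} (h : Hreg a) : Hreg (a ∘ Fin.castSucc) := by
  intro i x hx
  have hset : (a ∘ Fin.castSucc) '' {j | j < i} = a '' {j | j < i.castSucc} := by
    ext y
    constructor
    · rintro ⟨j, hj, rfl⟩
      exact ⟨j.castSucc, by simpa [Fin.castSucc_lt_castSucc_iff] using hj, rfl⟩
    · rintro ⟨j, hj, rfl⟩
      have hjne : j ≠ Fin.last d := by
        intro hEq
        rw [hEq] at hj
        exact absurd (lt_of_lt_of_le hj (Fin.le_last _)) (lt_irrefl _)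
      obtain ⟨j', rfl⟩ := Fin.exists_castSucc_eq.mpr hjne
      exact ⟨j', by simpa [Fin.castSucc_lt_castSucc_iff] using hj, rfl⟩
  rw [hset] at hx ⊢
  exact h i.castSucc x hx

lemma Hreg_last {a : Fin (d+1) → A} (h : Hreg a) (x : A)
    (hx : a (Fin.last d) * x ∈ Ideal.span (Set.range (a ∘ Fin.castSucc))) :
    x ∈ Ideal.span (Set.range (a ∘ Fin.castSucc)) := by
  have hset : a '' {j | j < Fin.last d} = Set.range (a ∘ Fin.castSucc) := by
    ext y
    constructor
    · rintro ⟨j, hj, rfl⟩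
      obtain ⟨j', rfl⟩ := Fin.exists_castSucc_eq.mpr (ne_of_lt hj)
      exact ⟨j', rfl⟩
    · rintro ⟨j, rfl⟩
      exact ⟨j.castSucc, Fin.castSucc_lt_last j, rfl⟩
  rw [← hset] at hx ⊢
  exact h (Fin.last d) x hx

lemma prod_mem_pow_card {ι : Type*} (s : Finset ι) (v : ι → A) (J : Ideal A)
    (h : ∀ i ∈ s, v i ∈ J) : ∏ i ∈ s, v i ∈ J ^ s.card := by
  classical
  induction s using Finset.induction with
  | empty => simp
  | insert x s hx ih =>
      rw [Finset.prod_insert hx, Finset.card_insert_of_notMem hx, pow_succ, mul_comm (J ^ _) J]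
      exact Ideal.mul_mem_mul (h x (mem_insert_self _ _))
        (ih fun i hi => h i (mem_insert_of_mem hi))

lemma prod_mem_pow_card_filter {ι : Type*} (s : Finset ι) (v : ι → A) (J : Ideal A)
    (P : ι → Prop) [DecidablePred P] (h : ∀ i ∈ s, P i → v i ∈ J) :
    ∏ i ∈ s, v i ∈ J ^ #(s.filter P) := by
  rw [← Finset.prod_filter_mul_prod_filter_not s P]
  exact Ideal.mul_mem_right _ _ (prod_mem_pow_card _ _ _ fun i hi =>
    h i (mem_filter.mp hi).1 (mem_filter.mp hi).2)

lemma Wd_mem_pow_tcount (a : Fin (d+1) → A) (f : Fin n → Fin (d+1)) :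
    Wd a f ∈ (Ideal.span (Set.range (a ∘ Fin.castSucc))) ^ (n - tcount f) := by
  classical
  have hcard : #(univ.filter fun i => ¬ f i = Fin.last d) = n - tcount f := by
    have h2 := Finset.card_filter_add_card_filter_not
      (s := (univ : Finset (Fin n))) (p := fun i => f i = Fin.last d)
    have : tcount f = #(univ.filter fun i => f i = Fin.last d) := rfl
    simp only [card_univ, Fintype.card_fin] at h2
    omega
  rw [Wd, ← hcard]
  apply prod_mem_pow_card_filter
  intro i _ hi
  obtain ⟨k, hk⟩ := Fin.exists_castSucc_eq.mpr hi
  exact Ideal.subset_span ⟨k, by rw [← hk]; rfl⟩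

lemma card_filter_not_lt {t : ℕ} (ht : t ≤ n) :
    #(univ.filter fun i : Fin n => ¬ (i : ℕ) < n - t) = t := by
  have h2 := Finset.card_filter_add_card_filter_not
    (s := (univ : Finset (Fin n))) (p := fun i : Fin n => (i : ℕ) < n - t)
  rw [card_filter_coe_lt (Nat.sub_le n t)] at h2
  simp only [card_univ, Fintype.card_fin] at h2
  omega

lemma Wd_nf {t : ℕ} (ht : t ≤ n) (a : Fin (d+1) → A) (g : Fin (n - t) → Fin d) :
    Wd a (nf n t g) = Wd (a ∘ Fin.castSucc) g * (a (Fin.last d)) ^ t := by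
  classical
  rw [Wd, ← Finset.prod_filter_mul_prod_filter_not univ (fun i : Fin n => (i : ℕ) < n - t)]
  congr 1
  · have hfil : (univ.filter fun i : Fin n => (i : ℕ) < n - t)
        = univ.map (Fin.castLEEmb (Nat.sub_le n t)) := by
      ext i
      rw [mem_filter, Finset.mem_map]
      constructor
      · rintro ⟨-, hi⟩
        exact ⟨⟨(i : ℕ), hi⟩, mem_univ _, by ext; simp⟩
      · rintro ⟨j, -, rfl⟩
        exact ⟨mem_univ _, by simpa using j.isLt⟩
    rw [hfil, Finset.prod_map, Wd]
    apply Finset.prod_congr rfl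
    intro j _
    have hj : ((Fin.castLEEmb (Nat.sub_le n t) j : Fin n) : ℕ) < n - t := by
      simpa [Fin.castLEEmb] using j.isLt
    rw [nf]
    rw [dif_pos hj]
    rfl
  · rw [Finset.prod_congr rfl (g := fun _ => a (Fin.last d)) (fun i hi => by
      simp only [mem_filter, mem_univ, true_and] at hi
      rw [nf, dif_neg hi]), Finset.prod_const, card_filter_not_lt ht]

end

section
variable {A : Type*} [CommRing A] {d n : ℕ}

lemma ev_apply (a : Fin d → A) (c : (Fin n → Fin d) → A) :
    ev a c = ∑ f, c f * Wd a f := rfl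

lemma exists_nf' {t : ℕ} {f : Fin n → Fin (d + 1)} (hf : Monotone f) (ht : tcount f = t) :
    ∃ g : Fin (n - t) → Fin d, f = nf n t g := by
  subst ht; exact exists_nf hf

/-- Quasi-regularity, class-sum form. -/
lemma F1 (a' : Fin d → A)
    (HB : ∀ (m : ℕ) (c : (Fin m → Fin d) → A), ev a' c = 0 → c ∈ KK a')
    (m : ℕ) (c : (Fin m → Fin d) → A)
    (hc : ev a' c ∈ (Ideal.span (Set.range a')) ^ (m + 1)) :
    ∀ g, classSum c g ∈ Ideal.span (Set.range a') := by
  obtain ⟨e, he⟩ := (mem_pow_iff a' (n := m + 1) _).mp hc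
  set c₂ : (Fin m → Fin d) → A := fun f => ∑ j : Fin d, e (Fin.cons j f) * a' j with hc₂
  have hev : ev a' c₂ = ev a' c := by
    rw [ev_apply, ← he]
    rw [← Equiv.sum_comp (Fin.consEquiv (fun _ => Fin d)) (fun h => e h * Wd a' h)]
    rw [Fintype.sum_prod_type]
    rw [Finset.sum_comm]
    apply Finset.sum_congr rfl
    intro f _
    rw [hc₂, Finset.sum_mul]
    apply Finset.sum_congr rfl
    intro j _
    show e (Fin.cons j f) * a' j * Wd a' f = e (Fin.consEquiv _ (j, f)) * Wd a' (Fin.consEquiv _ (j, f))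
    have : (Fin.consEquiv (fun _ => Fin d)) (j, f) = Fin.cons j f := rfl
    rw [this, Wd_cons]
    ring
  have hker : ev a' (c - c₂) = 0 := by rw [map_sub, hev, sub_self]
  have hK := HB m (c - c₂) hker
  intro g
  have h1 : classSum c g = classSum (c - c₂) g + classSum c₂ g := by
    rw [← classSum_add, sub_add_cancel]
  rw [h1]
  apply add_mem
  · exact classSum_mem_of_KK (fun y => by rintro ⟨j, rfl⟩; exact Ideal.subset_span ⟨j, rfl⟩)
      hK g
  · apply Submodule.sum_mem
    intro f _
    apply Submodule.sum_mem
    intro j _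
    exact Ideal.mul_mem_left _ _ (Ideal.subset_span ⟨j, rfl⟩)

/-- `b` is regular modulo every power of `I'`. -/
lemma F2 (a : Fin (d + 1) → A) (ha : Hreg a)
    (HB : ∀ (m : ℕ) (c : (Fin m → Fin d) → A), ev (a ∘ Fin.castSucc) c = 0 →
      c ∈ KK (a ∘ Fin.castSucc)) (s : ℕ) (x : A)
    (hx : a (Fin.last d) * x ∈ (Ideal.span (Set.range (a ∘ Fin.castSucc))) ^ s) :
    x ∈ (Ideal.span (Set.range (a ∘ Fin.castSucc))) ^ s := by
  set a' := a ∘ Fin.castSucc with ha'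
  set I' := Ideal.span (Set.range a') with hI'
  set b := a (Fin.last d) with hb
  have main : ∀ k, k ≤ s → x ∈ I' ^ k := by
    intro k
    induction k with
    | zero => intro _; simp
    | succ k ihk =>
        intro hks
        have hxk : x ∈ I' ^ k := ihk (by omega)
        obtain ⟨c, hcx⟩ := (mem_pow_iff a' (n := k) x).mp hxk
        have hc2 : ev a' (Psi c) = x := by
          have h0 := KK_le_ker_ev a' (sub_Psi_mem_KK a' c)
          rw [LinearMap.mem_ker, map_sub, sub_eq_zero] at h0
          rw [← h0, ev_apply, hcx]
        have hb2 : ev a' (fun f => b * Psi c f) = b * x := by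
          rw [ev_apply, ← hc2, ev_apply, Finset.mul_sum]
          exact Finset.sum_congr rfl fun f _ => by ring
        have hbx' : b * x ∈ I' ^ (k + 1) := Ideal.pow_le_pow_right hks hx
        have hcl := F1 a' HB k (fun f => b * Psi c f) (by rw [hb2]; exact hbx')
        have hpw : ∀ g, b * Psi c g ∈ I' :=
          pointwise_of_classSum (fun g hg => by rw [Psi_apply_not_monotone hg, mul_zero]) hcl
        have hptI : ∀ g, Psi c g ∈ I' := fun g => Hreg_last ha _ (hpw g)
        rw [← hc2, ev_apply]
        apply Submodule.sum_mem
        intro g _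
        rw [pow_succ, mul_comm (Psi c g)]
        exact Ideal.mul_mem_mul (Wd_mem_pow a' g) (hptI g)
  exact main s le_rfl

lemma F3 (a : Fin (d + 1) → A) (ha : Hreg a)
    (HB : ∀ (m : ℕ) (c : (Fin m → Fin d) → A), ev (a ∘ Fin.castSucc) c = 0 →
      c ∈ KK (a ∘ Fin.castSucc)) (t s : ℕ) (x : A)
    (hx : x * (a (Fin.last d)) ^ t ∈ (Ideal.span (Set.range (a ∘ Fin.castSucc))) ^ s) :
    x ∈ (Ideal.span (Set.range (a ∘ Fin.castSucc))) ^ s := by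
  induction t generalizing x with
  | zero => simpa using hx
  | succ t iht =>
      apply iht
      apply F2 a ha HB
      convert hx using 1
      ring

/-- push forward along the inclusion of alphabets -/
noncomputable def emb (c0 : (Fin n → Fin d) → A) : (Fin n → Fin (d + 1)) → A :=
  ∑ g : Fin n → Fin d, Pi.single (Fin.castSucc ∘ g) (c0 g)

lemma emb_single (g : Fin n → Fin d) (v : A) :
    emb (Pi.single g v) = (Pi.single (Fin.castSucc ∘ g) v : (Fin n → Fin (d+1)) → A) := by
  rw [emb, Finset.sum_eq_single g]
  · rw [Pi.single_eq_same]
  · intro g' _ hne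
    rw [Pi.single_eq_of_ne hne, Pi.single_zero]
  · intro h
    exact absurd (mem_univ g) h

lemma emb_add (x y : (Fin n → Fin d) → A) : emb (x + y) = emb x + emb y := by
  rw [emb, emb, emb, ← Finset.sum_add_distrib]
  exact Finset.sum_congr rfl fun g _ => by rw [Pi.add_apply, Pi.single_add]

lemma emb_smul (r : A) (x : (Fin n → Fin d) → A) : emb (r • x) = r • emb x := by
  rw [emb, emb, Finset.smul_sum]
  exact Finset.sum_congr rfl fun g _ => by rw [Pi.smul_apply, Pi.single_smul]

lemma emb_sub (x y : (Fin n → Fin d) → A) : emb (x - y) = emb x - emb y := by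
  rw [sub_eq_add_neg, emb_add, ← neg_one_smul A y, emb_smul, neg_one_smul, ← sub_eq_add_neg]

lemma emb_zero : emb (0 : (Fin n → Fin d) → A) = 0 := by
  rw [emb]
  exact Finset.sum_eq_zero fun g _ => by rw [Pi.zero_apply, Pi.single_zero]

lemma emb_mem_KK (a : Fin (d + 1) → A) {c0 : (Fin n → Fin d) → A}
    (h : c0 ∈ KK (a ∘ Fin.castSucc)) : emb c0 ∈ KK a := by
  induction h using Submodule.span_induction with
  | mem x hx =>
      rcases hx with ⟨f₀, σ₀, rfl⟩ | ⟨f₀, i, p, q, rfl⟩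
      · rw [emb_sub, emb_single, emb_single]
        exact Submodule.subset_span (Or.inl ⟨Fin.castSucc ∘ f₀, σ₀, rfl⟩)
      · rw [emb_sub, emb_smul, emb_smul, emb_single, emb_single,
          Function.comp_update, Function.comp_update]
        exact Submodule.subset_span
          (Or.inr ⟨Fin.castSucc ∘ f₀, i, p.castSucc, q.castSucc, rfl⟩)
  | zero => rw [emb_zero]; exact zero_mem _
  | add x y _ _ hx hy => rw [emb_add]; exact add_mem hx hy
  | smul r x _ hx => rw [emb_smul]; exact Submodule.smul_mem _ _ hx

end

section
variable {A : Type*} [CommRing A]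

lemma single_sum {d n m : ℕ} (f : Fin n → Fin d) (x : Fin m → A) :
    (Pi.single f (∑ j, x j) : (Fin n → Fin d) → A)
      = ∑ j, (Pi.single f (x j) : (Fin n → Fin d) → A) := by
  classical
  funext w
  rw [Finset.sum_apply]
  by_cases h : w = f
  · subst h; simp
  · simp [Pi.single_apply, h]

theorem mainB : ∀ (d : ℕ) (a : Fin d → A), Hreg a → ∀ (n : ℕ) (c : (Fin n → Fin d) → A),
    ev a c = 0 → c ∈ KK a := by
  intro d
  induction d with
  | zero =>
      intro a _ n c hc
      rcases Nat.eq_zero_or_pos n with rfl | hn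
      · have hsub : Subsingleton (Fin 0 → Fin 0) := ⟨fun f g => funext fun i => i.elim0⟩
        have hzero : c = 0 := by
          funext f
          have h1 : ev a c = c f * Wd a f := by
            rw [ev_apply]
            exact Fintype.sum_subsingleton _ f
          have h2 : Wd a f = 1 := by rw [Wd, Finset.univ_eq_empty, Finset.prod_empty]
          rw [h2, mul_one] at h1
          rw [Pi.zero_apply, ← h1, hc]
        rw [hzero]; exact zero_mem _
      · have hempty : IsEmpty (Fin n → Fin 0) := ⟨fun f => (f ⟨0, hn⟩).elim0⟩
        have hzero : c = 0 := funext fun f => (hempty.false f).elim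
        rw [hzero]; exact zero_mem _
  | succ d ihd =>
      intro a ha n c hc
      set a' := a ∘ Fin.castSucc with ha'def
      set I' := Ideal.span (Set.range a') with hI'def
      set b := a (Fin.last d) with hbdef
      have ha' : Hreg a' := Hreg_castSucc ha
      have HB := ihd a' ha'
      -- inner induction on the top `b`-degree
      have key : ∀ (T : ℕ) (c : (Fin n → Fin (d+1)) → A), ev a c = 0 →
          (∀ f, T < tcount f → c f = 0) → c ∈ KK a := by
        intro T
        induction T with
        | zero =>
            intro c hc hdeg
            set φ : (Fin n → Fin d) → (Fin n → Fin (d+1)) := fun g => Fin.castSucc ∘ g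
              with hφdef
            have hφinj : Function.Injective φ :=
              fun g g' h => funext fun i => Fin.castSucc_injective d (congrFun h i)
            have hnotim : ∀ f : Fin n → Fin (d+1), f ∉ Finset.univ.image φ → c f = 0 := by
              intro f hf
              have hex : ∃ i, f i = Fin.last d := by
                by_contra hno
                push_neg at hno
                apply hf
                refine Finset.mem_image.mpr ⟨fun i => (f i).castPred (hno i), Finset.mem_univ _, ?_⟩
                funext i
                simp [hφdef, Fin.castSucc_castPred]
              obtain ⟨i, hi⟩ := hex
              apply hdeg
              have : i ∈ Finset.univ.filter fun j => f j = Fin.last d := by simp [hi]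
              exact Finset.card_pos.mpr ⟨i, this⟩
            have hWφ : ∀ g, Wd a (φ g) = Wd a' g := fun g => rfl
            have hc0 : ev a' (fun g => c (φ g)) = 0 := by
              rw [ev_apply, ← hc, ev_apply]
              have step1 : (∑ g : Fin n → Fin d, c (φ g) * Wd a' (g : Fin n → Fin d))
                  = ∑ g : Fin n → Fin d, c (φ g) * Wd a (φ g) := rfl
              rw [step1, show (∑ g : Fin n → Fin d, c (φ g) * Wd a (φ g))
                  = ∑ f ∈ Finset.univ.image φ, c f * Wd a f from
                (Finset.sum_image (f := fun f => c f * Wd a f)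
                  (fun g _ g' _ h => hφinj h)).symm]
              exact Finset.sum_subset (Finset.subset_univ _)
                (fun f _ hf => by rw [hnotim f hf, zero_mul])
            have hK0 := HB n (fun g => c (φ g)) hc0
            have hcc : c = emb (fun g => c (φ g)) := by
              funext f
              by_cases hf : f ∈ Finset.univ.image φ
              · obtain ⟨g, -, rfl⟩ := Finset.mem_image.mp hf
                rw [emb, Finset.sum_apply, Finset.sum_eq_single g]
                · rw [Pi.single_eq_same]
                · intro g' _ hne
                  rw [Pi.single_apply, if_neg]
                  intro h
                  exact hne (hφinj h).symm
                · intro h; exact absurd (Finset.mem_univ g) h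
              · rw [hnotim f hf, emb, Finset.sum_apply]
                symm
                apply Finset.sum_eq_zero
                intro g _
                rw [Pi.single_apply, if_neg]
                intro h
                exact hf (by rw [h]; exact Finset.mem_image_of_mem φ (Finset.mem_univ g))
            rw [hcc]
            exact emb_mem_KK a hK0
        | succ T ihT =>
            intro c hc hdeg
            by_cases hTn : T + 1 ≤ n
            swap
            · exact ihT c hc fun f hf =>
                absurd hf (not_lt.mpr (le_trans (tcount_le f) (by omega)))
            set cs := Psi c with hcs
            suffices hcsK : cs ∈ KK a by
              have h1 := add_mem (sub_Psi_mem_KK a c) hcsK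
              rwa [sub_add_cancel] at h1
            have hcs_ev : ev a cs = 0 := by
              have h0 := KK_le_ker_ev a (sub_Psi_mem_KK a c)
              rw [LinearMap.mem_ker, map_sub, sub_eq_zero] at h0
              rw [← h0, hc]
            have hcs_deg : ∀ f, T + 1 < tcount f → cs f = 0 := by
              intro f hf
              apply Psi_apply_eq_zero
              intro f' hf'
              apply hdeg
              have h1 : tcount (srt f') = tcount f' := tcount_comp_perm f' (Tuple.sort f')
              rw [hf'] at h1
              omega
            have hcs_mono : ∀ f, ¬ Monotone f → cs f = 0 := fun f hf =>
              Psi_apply_not_monotone hf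
            set cN : (Fin (n - (T+1)) → Fin d) → A := fun g => cs (nf n (T+1) g) with hcN
            set i0 : Fin n := ⟨n - (T+1), by omega⟩ with hi0
            have hnfi0 : ∀ g : Fin (n - (T+1)) → Fin d, nf n (T+1) g i0 = Fin.last d := by
              intro g
              simp only [nf]
              exact dif_neg (lt_irrefl _)
            have himgsub : (Finset.univ.image (nf n (T+1) (d := d)))
                ⊆ Finset.univ.filter (fun f => tcount f = T+1) := by
              intro f hf
              obtain ⟨g, -, rfl⟩ := Finset.mem_image.mp hf
              simp [tcount_nf hTn]
            have htop : ∑ f ∈ Finset.univ.filter (fun f => tcount f = T+1), cs f * Wd a f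
                = (∑ g, cN g * Wd a' g) * b^(T+1) := by
              rw [← Finset.sum_subset himgsub (fun f hfil hfim => ?_)]
              · rw [Finset.sum_image (f := fun f => cs f * Wd a f)
                  (fun g _ g' _ h => nf_inj h), Finset.sum_mul]
                apply Finset.sum_congr rfl
                intro g _
                rw [Wd_nf hTn, hcN]
                ring
              · by_cases hm : Monotone f
                · obtain ⟨g, rfl⟩ := exists_nf' hm (by simpa using (Finset.mem_filter.mp hfil).2)
                  exact absurd (Finset.mem_image_of_mem _ (Finset.mem_univ g)) hfim
                · rw [hcs_mono f hm, zero_mul]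
            have hE : ∑ f ∈ Finset.univ.filter (fun f => ¬ tcount f = T+1), cs f * Wd a f
                ∈ I' ^ (n - T) := by
              apply Submodule.sum_mem
              intro f hf
              rcases lt_or_ge (T + 1) (tcount f) with h1 | h1
              · rw [hcs_deg f h1, zero_mul]; exact zero_mem _
              · have h2 : tcount f ≠ T + 1 := by simpa using (Finset.mem_filter.mp hf).2
                apply Ideal.mul_mem_left
                refine SetLike.le_def.mp (Ideal.pow_le_pow_right ?_) (Wd_mem_pow_tcount a f)
                omega
            have hsplit : (∑ g, cN g * Wd a' g) * b^(T+1)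
                + ∑ f ∈ Finset.univ.filter (fun f => ¬ tcount f = T+1), cs f * Wd a f = 0 := by
              rw [← htop, Finset.sum_filter_add_sum_filter_not, ← ev_apply, hcs_ev]
            have hD : (∑ g, cN g * Wd a' g) ∈ I' ^ (n - T) := by
              apply F3 a ha HB (T+1)
              rw [eq_neg_of_add_eq_zero_left hsplit]
              exact neg_mem hE
            have hnT : n - T = (n - (T+1)) + 1 := by omega
            have hcl : ∀ g, classSum cN g ∈ I' := by
              apply F1 a' HB (n - (T+1)) cN
              rw [ev_apply, ← hnT]
              exact hD
            have hcNmono : ∀ g, ¬ Monotone g → cN g = 0 := fun g hg =>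
              hcs_mono _ (fun hmono => hg ((monotone_nf_iff g).mp hmono))
            have hpt : ∀ g, cN g ∈ I' := pointwise_of_classSum hcNmono hcl
            have hrep : ∀ g, ∃ rr : Fin d → A, ∑ j, rr j * a' j = cN g := by
              intro g
              have h1 := hpt g
              rw [hI'def, ← Ideal.submodule_span_eq] at h1
              obtain ⟨rr, hrr⟩ := (Submodule.mem_span_range_iff_exists_fun A).mp h1
              exact ⟨rr, by simpa [smul_eq_mul] using hrr⟩
            choose r hr using hrep
            set topP : (Fin n → Fin (d+1)) → A :=
              ∑ g, Pi.single (nf n (T+1) g) (cN g) with htopP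
            set push : (Fin n → Fin (d+1)) → A :=
              ∑ g, ∑ j, Pi.single (Function.update (nf n (T+1) g) i0 j.castSucc) (r g j * b)
              with hpush
            have hdiff : topP - push ∈ KK a := by
              rw [htopP, hpush, ← Finset.sum_sub_distrib]
              apply Submodule.sum_mem
              intro g _
              rw [← hr g, single_sum, ← Finset.sum_sub_distrib]
              apply Submodule.sum_mem
              intro j _
              rw [single_eq_smul (nf n (T+1) g) (r g j * a' j),
                single_eq_smul (Function.update (nf n (T+1) g) i0 j.castSucc) (r g j * b),
                mul_smul, mul_smul, ← smul_sub]
              apply Submodule.smul_mem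
              have hgen : (b • (Pi.single (Function.update (nf n (T+1) g) i0 j.castSucc) (1:A)
                    : (Fin n → Fin (d+1)) → A)
                  - a' j • (Pi.single (nf n (T+1) g) (1:A) : (Fin n → Fin (d+1)) → A))
                  ∈ KK a := by
                have hupd : (Pi.single (nf n (T+1) g) (1:A) : (Fin n → Fin (d+1)) → A)
                    = Pi.single (Function.update (nf n (T+1) g) i0 (Fin.last d)) 1 := by
                  rw [show Function.update (nf n (T+1) g) i0 (Fin.last d) = nf n (T+1) g from by
                    conv_lhs => rw [← hnfi0 g]
                    exact Function.update_eq_self i0 _]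
                rw [hupd]
                exact Submodule.subset_span
                  (Or.inr ⟨nf n (T+1) g, i0, j.castSucc, Fin.last d, rfl⟩)
              have hneg := Submodule.neg_mem _ hgen
              rw [neg_sub] at hneg
              exact hneg
            set c3 := cs - (topP - push) with hc3def
            have hc3ev : ev a c3 = 0 := by
              have hd0 := KK_le_ker_ev a hdiff
              rw [LinearMap.mem_ker] at hd0
              rw [hc3def, map_sub, hcs_ev, hd0, sub_zero]
            have hc3deg : ∀ f, T < tcount f → c3 f = 0 := by
              intro f hf
              have hpushf : push f = 0 := by
                rw [hpush, Finset.sum_apply]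
                apply Finset.sum_eq_zero
                intro g _
                rw [Finset.sum_apply]
                apply Finset.sum_eq_zero
                intro j _
                apply Pi.single_eq_of_ne
                intro hEq
                have h1 := tcount_update_lt (nf n (T+1) g) i0 j.castSucc (hnfi0 g)
                  (ne_of_lt (Fin.castSucc_lt_last j))
                rw [tcount_nf hTn] at h1
                rw [hEq] at hf
                omega
              have htopf : topP f = cs f := by
                by_cases h1 : tcount f = T + 1
                · by_cases h2 : Monotone f
                  · obtain ⟨g0, rfl⟩ := exists_nf' h2 h1
                    rw [htopP, Finset.sum_apply, Finset.sum_eq_single g0]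
                    · rw [Pi.single_eq_same]
                    · intro g' _ hne
                      exact Pi.single_eq_of_ne (fun h => hne (nf_inj h).symm) _
                    · intro h; exact absurd (Finset.mem_univ g0) h
                  · rw [hcs_mono f h2, htopP, Finset.sum_apply]
                    apply Finset.sum_eq_zero
                    intro g _
                    by_cases hm : Monotone g
                    · apply Pi.single_eq_of_ne
                      intro hEq
                      exact h2 (hEq ▸ (monotone_nf_iff g).mpr hm)
                    · rw [hcNmono g hm, Pi.single_zero, Pi.zero_apply]
                · have h3 : T + 1 < tcount f := by omega
                  rw [hcs_deg f h3, htopP, Finset.sum_apply]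
                  apply Finset.sum_eq_zero
                  intro g _
                  apply Pi.single_eq_of_ne
                  intro hEq
                  exact h1 (by rw [hEq, tcount_nf hTn])
              have : c3 f = cs f - (topP f - push f) := rfl
              rw [this, htopf, hpushf, sub_zero, sub_self]
            have hc3K := ihT c3 hc3ev hc3deg
            have hfin : cs = c3 + (topP - push) := by rw [hc3def, sub_add_cancel]
            rw [hfin]
            exact add_mem hc3K hdiff
      exact key n c hc fun f hf => absurd hf (not_lt.mpr (tcount_le f))

end

section Tensor
open scoped TensorProduct
variable {A : Type*} [CommRing A] {d n : ℕ}

variable (a : Fin d → A) (I : Ideal A) (hI : I = Ideal.span (Set.range a))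

noncomputable def aI (j : Fin d) : I := ⟨a j, by rw [hI]; exact Ideal.subset_span ⟨j, rfl⟩⟩

noncomputable def EE (f : Fin n → Fin d) : (⨂[A] _ : Fin n, I) :=
  PiTensorProduct.tprod A (fun i => aI a I hI (f i))

noncomputable def Phi : ((Fin n → Fin d) → A) →ₗ[A] (⨂[A] _ : Fin n, I) where
  toFun c := ∑ f, c f • EE a I hI f
  map_add' c c' := by simp [add_smul, Finset.sum_add_distrib]
  map_smul' r c := by simp [Finset.smul_sum, smul_smul]

lemma Phi_single (f : Fin n → Fin d) (r : A) :
    Phi a I hI (Pi.single f r) = r • EE a I hI f := by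
  simp only [Phi, LinearMap.coe_mk, AddHom.coe_mk]
  rw [Finset.sum_eq_single f]
  · rw [Pi.single_eq_same]
  · intro f' _ hne
    rw [Pi.single_eq_of_ne hne, zero_smul]
  · intro h; exact absurd (Finset.mem_univ f) h

lemma exists_Phi_eq (x : ⨂[A] _ : Fin n, I) :
    ∃ c : (Fin n → Fin d) → A, x = Phi a I hI c := by
  have hx : x ∈ Submodule.span A (Set.range (EE a I hI (n := n))) := by
    induction x using PiTensorProduct.induction_on with
    | smul_tprod r v =>
        apply Submodule.smul_mem
        have hv : ∀ i, ∃ cc : Fin d → A, v i = ∑ j, cc j • aI a I hI j := by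
          intro i
          have hmem : (v i : A) ∈ Ideal.span (Set.range a) := by
            rw [← hI]; exact (v i).2
          rw [← Ideal.submodule_span_eq] at hmem
          obtain ⟨cc, hcc⟩ := (Submodule.mem_span_range_iff_exists_fun A).mp hmem
          refine ⟨cc, Subtype.ext ?_⟩
          rw [← hcc]
          simp only [AddSubmonoidClass.coe_finset_sum, SetLike.val_smul, smul_eq_mul]
          exact Finset.sum_congr rfl fun j _ => rfl
        choose cc hcc using hv
        have hv2 : PiTensorProduct.tprod A v
            = ∑ f : Fin n → Fin d, (∏ i, cc i (f i)) • EE a I hI f := by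
          rw [show v = fun i => ∑ j, cc i j • aI a I hI j from funext hcc]
          rw [MultilinearMap.map_sum]
          apply Finset.sum_congr rfl
          intro f _
          exact MultilinearMap.map_smul_univ _ _ _
        rw [hv2]
        exact Submodule.sum_mem _ fun f _ =>
          Submodule.smul_mem _ _ (Submodule.subset_span ⟨f, rfl⟩)
    | add x y hx hy => exact add_mem hx hy
  obtain ⟨c, hc⟩ := (Submodule.mem_span_range_iff_exists_fun A).mp hx
  exact ⟨c, by rw [← hc]; rfl⟩

def SS : Submodule A (⨂[A] _ : Fin n, I) :=
  Submodule.span A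
    {x : ⨂[A] _ : Fin n, I | ∃ (v : Fin n → I) (σ : Equiv.Perm (Fin n)),
      x = PiTensorProduct.tprod A v - PiTensorProduct.tprod A (v ∘ σ)}

lemma Phi_KK_le_SS {k : (Fin n → Fin d) → A} (hk : k ∈ KK a) :
    Phi a I hI k ∈ SS I := by
  induction hk using Submodule.span_induction with
  | mem x hx =>
      rcases hx with ⟨f₀, σ₀, rfl⟩ | ⟨f₀, i, p, q, rfl⟩
      · rw [map_sub, Phi_single, Phi_single, one_smul, one_smul]
        have : EE a I hI (f₀ ∘ σ₀) - EE a I hI f₀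
            = -(PiTensorProduct.tprod A ((aI a I hI) ∘ f₀)
              - PiTensorProduct.tprod A (((aI a I hI) ∘ f₀) ∘ σ₀)) := by
          rw [neg_sub]; rfl
        rw [this]
        exact Submodule.neg_mem _ (Submodule.subset_span ⟨(aI a I hI) ∘ f₀, σ₀, rfl⟩)
      · rw [map_sub, map_smul, map_smul, Phi_single, Phi_single, one_smul, one_smul]
        have e1 : a q • EE a I hI (Function.update f₀ i p)
            = PiTensorProduct.tprod A
                (Function.update ((aI a I hI) ∘ f₀) i (a q • aI a I hI p)) := by
          rw [EE, show ((fun i' => aI a I hI (Function.update f₀ i p i')) : Fin n → I)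
              = Function.update ((aI a I hI) ∘ f₀) i (aI a I hI p) from
            Function.comp_update (aI a I hI) f₀ i p]
          rw [MultilinearMap.map_update_smul]
        have e2 : a p • EE a I hI (Function.update f₀ i q)
            = PiTensorProduct.tprod A
                (Function.update ((aI a I hI) ∘ f₀) i (a p • aI a I hI q)) := by
          rw [EE, show ((fun i' => aI a I hI (Function.update f₀ i q i')) : Fin n → I)
              = Function.update ((aI a I hI) ∘ f₀) i (aI a I hI q) from
            Function.comp_update (aI a I hI) f₀ i q]
          rw [MultilinearMap.map_update_smul]
        rw [e1, e2]
        have : (a q • aI a I hI p) = (a p • aI a I hI q) := by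
          apply Subtype.ext
          show a q * a p = a p * a q
          ring
        rw [this, sub_self]
        exact zero_mem _
  | zero => rw [map_zero]; exact zero_mem _
  | add x y _ _ hx hy => rw [map_add]; exact add_mem hx hy
  | smul r x _ hx => rw [map_smul]; exact Submodule.smul_mem _ _ hx

end Tensor

end Stmt5

open scoped TensorProduct

/-- For an ideal `I` generated by a regular sequence, the natural surjection
`Sym^n(I) → I^n` is an isomorphism.  We express this via the multiplication map
`μ : I^{⊗n} → A`: its range is `I^n` (surjectivity) and its kernel is exactly the
submodule of symmetry relations (so the induced map on `Sym^n(I) = I^{⊗n}/relations`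
is injective). -/
theorem stmt5 (A : Type u_1) [CommRing A] (d : ℕ) (a : Fin d → A)
    (hreg : RingTheory.Sequence.IsRegular A (List.ofFn a))
    (I : Ideal A) (hI : I = Ideal.span (Set.range a)) (n : ℕ)
    (μ : (⨂[A] _ : Fin n, I) →ₗ[A] A)
    (hμ : μ = PiTensorProduct.lift
      ((MultilinearMap.mkPiAlgebra A (Fin n) A).compLinearMap
        (fun _ : Fin n => I.subtype))) :
    LinearMap.ker μ =
      Submodule.span A
        {x : ⨂[A] _ : Fin n, I | ∃ (v : Fin n → I) (σ : Equiv.Perm (Fin n)),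
          x = PiTensorProduct.tprod A v - PiTensorProduct.tprod A (v ∘ σ)} ∧
    LinearMap.range μ = (I ^ n : Ideal A) := by
  classical
  have hWreg : Stmt5.Hreg a := Stmt5.hreg_of_isWeaklyRegular hreg.toIsWeaklyRegular
  have hμt : ∀ v : Fin n → I, μ (PiTensorProduct.tprod A v) = ∏ i, (v i : A) := by
    intro v
    rw [hμ]
    simp [PiTensorProduct.lift.tprod, MultilinearMap.compLinearMap_apply,
      MultilinearMap.mkPiAlgebra_apply, Submodule.coe_subtype]
  have hμE : ∀ f : Fin n → Fin d, μ (Stmt5.EE a I hI f) = Stmt5.Wd a f := by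
    intro f
    rw [Stmt5.EE, hμt, Stmt5.Wd]
    rfl
  have hμΦ : ∀ c : (Fin n → Fin d) → A, μ (Stmt5.Phi a I hI c) = Stmt5.ev a c := by
    intro c
    rw [Stmt5.ev_apply]
    simp only [Stmt5.Phi, LinearMap.coe_mk, AddHom.coe_mk]
    rw [map_sum]
    apply Finset.sum_congr rfl
    intro f _
    rw [map_smul, hμE, smul_eq_mul]
  constructor
  · apply le_antisymm
    · intro x hx
      rw [LinearMap.mem_ker] at hx
      obtain ⟨c, rfl⟩ := Stmt5.exists_Phi_eq a I hI x
      have hev : Stmt5.ev a c = 0 := by rw [← hμΦ]; exact hx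
      have hK := Stmt5.mainB d a hWreg n c hev
      exact Stmt5.Phi_KK_le_SS a I hI hK
    · rw [Submodule.span_le]
      rintro x ⟨v, σ, rfl⟩
      rw [SetLike.mem_coe, LinearMap.mem_ker, map_sub, hμt, hμt]
      rw [show ∏ i, ((v ∘ σ) i : A) = ∏ i, (v i : A) from
        Equiv.prod_comp σ (fun i => (v i : A))]
      exact sub_self _
  · apply le_antisymm
    · intro x hx
      rw [LinearMap.mem_range] at hx
      obtain ⟨y, rfl⟩ := hx
      obtain ⟨c, rfl⟩ := Stmt5.exists_Phi_eq a I hI y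
      rw [hμΦ, Stmt5.ev_apply]
      apply Submodule.sum_mem
      intro f _
      apply Ideal.mul_mem_left
      rw [hI]
      exact Stmt5.Wd_mem_pow a f
    · intro x hx
      rw [hI] at hx
      obtain ⟨c, hc⟩ := (Stmt5.mem_pow_iff a x).mp hx
      refine ⟨Stmt5.Phi a I hI c, ?_⟩
      rw [hμΦ, Stmt5.ev_apply, hc]
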